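/- Let X be a compact subset of ℂⁿ, X₀ a closed subset of X, and f ∈ C(X) a complex-valued function with X₀ = f⁻¹(0), such that P(f(X)) = C(f(X)) and every fiber f⁻¹(t) for t ∈ ℂ \ {0} is polynomially convex. Then the graph Γ_f = {(x, f(x)) : x ∈ X} ⊂ ℂ^{n+1} satisfies Γ̂_f = (X̂₀ × {0}) ∪ Γ_f. -/

import Mathlib

open MvPolynomial

/-- The polynomially convex hull of a set `X ⊆ ℂⁿ`. -/
noncomputable def polyHull (n : ℕ) (X : Set (Fin n → ℂ)) : Set (Fin n → ℂ) :=
  {z | ∀ p : MvPolynomial (Fin n) ℂ, ‖eval z p‖ ≤ sSup ((fun x => ‖eval x p‖) '' X)}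

/-- `X` is polynomially convex when it equals its polynomially convex hull. -/
def IsPolyConvex (n : ℕ) (X : Set (Fin n → ℂ)) : Prop := polyHull n X = X

/-- `P(X)`: the uniform closure in `C(X)` of the holomorphic polynomials restricted to `X`. -/
noncomputable def polyAlg (n : ℕ) (X : Set (Fin n → ℂ)) : Set C(X, ℂ) :=
  closure {f : C(X, ℂ) | ∃ p : MvPolynomial (Fin n) ℂ, ∀ x : X, f x = eval (x : Fin n → ℂ) p}

/-- `P(Y)` for a compact subset `Y ⊆ ℂ`. -/
noncomputable def polyAlg1 (Y : Set ℂ) : Set C(Y, ℂ) :=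
  closure {f : C(Y, ℂ) | ∃ p : Polynomial ℂ, ∀ y : Y, f y = p.eval (y : ℂ)}

namespace Stmt2Aux

lemma aeval_eq_eval' {σ : Type*} (f : σ → ℂ) (p : MvPolynomial σ ℂ) : aeval f p = eval f p := by
  rw [← coe_aeval_eq_eval]; rfl

lemma eval_aevalX (n : ℕ) (z : Fin (n+1) → ℂ) (q : Polynomial ℂ) :
    eval z (Polynomial.aeval (X (Fin.last n) : MvPolynomial (Fin (n+1)) ℂ) q)
      = q.eval (z (Fin.last n)) := by
  rw [← aeval_eq_eval', ← Polynomial.aeval_algHom_apply, aeval_X, Polynomial.aeval_def]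
  simp [Algebra.algebraMap_self, Polynomial.eval₂_id]

lemma eval_subst0 (n : ℕ) (w : Fin n → ℂ) (P : MvPolynomial (Fin (n+1)) ℂ) :
    eval w (aeval (Fin.snoc X (0:MvPolynomial (Fin n) ℂ)) P) = eval (Fin.snoc w 0) P := by
  rw [← aeval_eq_eval', ← AlgHom.comp_apply, comp_aeval, ← aeval_eq_eval']
  have : (fun i => (aeval w : MvPolynomial (Fin n) ℂ →ₐ[ℂ] ℂ)
      ((Fin.snoc X (0:MvPolynomial (Fin n) ℂ) : Fin (n+1) → MvPolynomial (Fin n) ℂ) i))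
      = Fin.snoc w 0 := by
    funext i
    refine Fin.lastCases ?_ (fun i => ?_) i <;> simp [aeval_eq_eval']
  simp only [this]

lemma eval_snoc_mul (n : ℕ) (x : Fin n → ℂ) (s : ℂ) (p : MvPolynomial (Fin n) ℂ)
    (q : Polynomial ℂ) :
    eval (Fin.snoc x s) (rename Fin.castSucc p *
      Polynomial.aeval (X (Fin.last n) : MvPolynomial (Fin (n+1)) ℂ) q)
      = eval x p * q.eval s := by
  have hc : Fin.snoc x s ∘ Fin.castSucc = x := by funext i; simp
  rw [map_mul, eval_rename, hc, eval_aevalX, Fin.snoc_last]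

/-- bddAbove of norms of a polynomial over a compact set -/
lemma bddAbove_norm_eval {m : ℕ} {S : Set (Fin m → ℂ)} (hS : IsCompact S)
    (p : MvPolynomial (Fin m) ℂ) : BddAbove ((fun x => ‖eval x p‖) '' S) :=
  (hS.image (Continuous.norm (MvPolynomial.continuous_eval p))).bddAbove

end Stmt2Aux

open Stmt2Aux in
theorem stmt2 (n : ℕ) (X : Set (Fin n → ℂ)) (hX : IsCompact X)
    (X₀ : Set (Fin n → ℂ)) (hX₀closed : IsClosed X₀) (hX₀sub : X₀ ⊆ X)
    (f : C(X, ℂ))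
    (hfib0 : X₀ = Subtype.val '' (f ⁻¹' {0}))
    (hfX : polyAlg1 (Set.range f) = Set.univ)
    (hfibers : ∀ t : ℂ, t ≠ 0 → IsPolyConvex n (Subtype.val '' (f ⁻¹' {t}))) :
    polyHull (n + 1) {z : Fin (n + 1) → ℂ | ∃ x : X, z = Fin.snoc (x : Fin n → ℂ) (f x)} =
      {z : Fin (n + 1) → ℂ | ∃ w ∈ polyHull n X₀, z = Fin.snoc w 0} ∪
        {z : Fin (n + 1) → ℂ | ∃ x : X, z = Fin.snoc (x : Fin n → ℂ) (f x)} := by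
  haveI : CompactSpace X := isCompact_iff_compactSpace.mp hX
  set Γ : Set (Fin (n+1) → ℂ) :=
    {z : Fin (n + 1) → ℂ | ∃ x : X, z = Fin.snoc (x : Fin n → ℂ) (f x)} with hΓ
  -- Γ is compact
  have hgcont : Continuous (fun x : X => (Fin.snoc (x : Fin n → ℂ) (f x) : Fin (n+1) → ℂ)) := by
    apply continuous_pi
    intro i
    refine Fin.lastCases ?_ (fun j => ?_) i
    · have : (fun x : X => (Fin.snoc (x : Fin n → ℂ) (f x) : Fin (n+1) → ℂ) (Fin.last n))
          = fun x : X => f x := by funext x; simp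
      rw [this]; exact f.continuous
    · have : (fun x : X => (Fin.snoc (x : Fin n → ℂ) (f x) : Fin (n+1) → ℂ) (Fin.castSucc j))
          = fun x : X => (x : Fin n → ℂ) j := by funext x; simp
      rw [this]; exact (continuous_apply j).comp continuous_subtype_val
  have hΓeq : Γ = Set.range (fun x : X => (Fin.snoc (x : Fin n → ℂ) (f x) : Fin (n+1) → ℂ)) := by
    ext z; simp [hΓ, Set.range, eq_comm]
  have hΓcomp : IsCompact Γ := hΓeq ▸ isCompact_range hgcont
  have hΓbdd : ∀ P : MvPolynomial (Fin (n+1)) ℂ, BddAbove ((fun z => ‖eval z P‖) '' Γ) :=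
    fun P => bddAbove_norm_eval hΓcomp P
  -- the range of f
  set Y : Set ℂ := Set.range f with hY
  have hYcomp : IsCompact Y := isCompact_range f.continuous
  haveI : CompactSpace Y := isCompact_iff_compactSpace.mp hYcomp
  -- approximation lemma from hfX
  have happrox : ∀ g : C(Y, ℂ), ∀ ε : ℝ, 0 < ε →
      ∃ q : Polynomial ℂ, ∀ y : Y, ‖q.eval (y:ℂ) - g y‖ ≤ ε := by
    intro g ε hε
    have hg : g ∈ polyAlg1 Y := by rw [hfX]; trivial
    rw [polyAlg1, Metric.mem_closure_iff] at hg
    obtain ⟨g', hg'mem, hdist⟩ := hg ε hε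
    obtain ⟨q, hq⟩ := hg'mem
    refine ⟨q, fun y => ?_⟩
    have := ContinuousMap.dist_apply_le_dist (f := g) (g := g') y
    rw [dist_comm] at hdist
    calc ‖q.eval (y:ℂ) - g y‖ = dist (g' y) (g y) := by
          rw [hq y, dist_eq_norm]
      _ ≤ dist g' g := ContinuousMap.dist_apply_le_dist y
      _ ≤ ε := hdist.le
  ext z
  constructor
  · -- forward inclusion
    intro hz
    -- X is nonempty
    rcases Set.eq_empty_or_nonempty X with hXe | hXne
    · exfalso
      have h1 := hz 1
      have : Γ = ∅ := by
        rw [hΓeq]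
        have : IsEmpty X := by
          rw [hXe] at *; exact Set.isEmpty_coe_sort.mpr rfl
        exact Set.range_eq_empty _
      rw [this] at h1
      simp only [Set.image_empty, Real.sSup_empty, map_one, norm_one] at h1
      linarith
    have hΓne : Γ.Nonempty := by
      obtain ⟨x₀, hx₀⟩ := hXne
      exact ⟨_, ⟨⟨x₀, hx₀⟩, rfl⟩⟩
    set t : ℂ := z (Fin.last n) with hts
    set w : Fin n → ℂ := Fin.init z with hws
    have hzsnoc : z = Fin.snoc w t := (Fin.snoc_init_self z).symm
    -- Step 1 : t ∈ Y
    have htY : t ∈ Y := by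
      by_contra ht
      -- bound on |y - t| on Y
      obtain ⟨D, hD⟩ : ∃ D : ℝ, ∀ y ∈ Y, ‖y - t‖ ≤ D := by
        obtain ⟨D, hD⟩ := (hYcomp.image (Continuous.norm (continuous_id.sub continuous_const))).bddAbove
        exact ⟨D, fun y hy => hD ⟨y, hy, rfl⟩⟩
      have hD0 : 0 ≤ D := by
        obtain ⟨x₀, hx₀⟩ := hXne
        exact le_trans (norm_nonneg _) (hD _ ⟨⟨x₀, hx₀⟩, rfl⟩)
      have hεpos : (0:ℝ) < 1 / (2 * (D + 1)) := by positivity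
      set g : C(Y, ℂ) := ⟨fun y => ((y:ℂ) - t)⁻¹, by
        apply Continuous.inv₀
        · exact (continuous_subtype_val.sub continuous_const)
        · intro y
          exact sub_ne_zero.mpr (fun h => ht (h ▸ y.2))⟩ with hg
      obtain ⟨q, hq⟩ := happrox g _ hεpos
      set r : Polynomial ℂ := (Polynomial.X - Polynomial.C t) * q - 1 with hr
      have h1 := hz (Polynomial.aeval (MvPolynomial.X (Fin.last n) : MvPolynomial (Fin (n+1)) ℂ) r)
      rw [eval_aevalX, ← hts] at h1
      have hrt : ‖r.eval t‖ = 1 := by simp [hr]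
      have hbound : ∀ z' ∈ Γ, ‖eval z' (Polynomial.aeval
          (MvPolynomial.X (Fin.last n) : MvPolynomial (Fin (n+1)) ℂ) r)‖ ≤ 1/2 := by
        rintro z' ⟨x, rfl⟩
        rw [eval_aevalX]
        have : (Fin.snoc (x : Fin n → ℂ) (f x) : Fin (n+1) → ℂ) (Fin.last n) = f x := by simp
        rw [this]
        have hfxY : (f x) ∈ Y := ⟨x, rfl⟩
        have hne : (f x) - t ≠ 0 := sub_ne_zero.mpr (fun h => ht (h ▸ hfxY))
        have : r.eval (f x) = ((f x) - t) * (q.eval (f x) - ((f x) - t)⁻¹) := by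
          rw [hr]; simp only [Polynomial.eval_sub, Polynomial.eval_mul, Polynomial.eval_X,
            Polynomial.eval_C, Polynomial.eval_one]
          field_simp
        rw [this, norm_mul]
        have h1' : ‖(f x) - t‖ ≤ D := hD _ hfxY
        have h2' : ‖q.eval (f x) - ((f x) - t)⁻¹‖ ≤ 1 / (2 * (D + 1)) := hq ⟨f x, hfxY⟩
        calc ‖f x - t‖ * ‖q.eval (f x) - ((f x) - t)⁻¹‖
            ≤ D * (1 / (2 * (D + 1))) := by
              apply mul_le_mul h1' h2' (norm_nonneg _) hD0
          _ ≤ 1/2 := by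
              rw [mul_one_div, div_le_div_iff₀ (by positivity) (by norm_num : (0:ℝ) < 2)]
              nlinarith
      have : sSup ((fun z' => ‖eval z' (Polynomial.aeval
          (MvPolynomial.X (Fin.last n) : MvPolynomial (Fin (n+1)) ℂ) r)‖) '' Γ) ≤ 1/2 := by
        apply Real.sSup_le
        · rintro v ⟨z', hz', rfl⟩; exact hbound z' hz'
        · norm_num
      rw [hrt] at h1
      linarith
    -- Step 2: the initial part w lies in the hull of the fiber
    set F : Set (Fin n → ℂ) := Subtype.val '' (f ⁻¹' {t}) with hF
    have hFcomp : IsCompact F := ((IsClosed.preimage f.continuous isClosed_singleton).isCompact).image continuous_subtype_val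
    have hFne : F.Nonempty := by
      obtain ⟨x, hx⟩ := htY
      exact ⟨x, ⟨x, hx, rfl⟩⟩
    have hwF : w ∈ polyHull n F := by
      intro p
      set B₀ : ℝ := sSup ((fun x => ‖eval x p‖) '' F) with hB₀
      have hB₀0 : 0 ≤ B₀ := by
        obtain ⟨x, hx⟩ := hFne
        exact le_trans (norm_nonneg _) (le_csSup (bddAbove_norm_eval hFcomp p) ⟨x, hx, rfl⟩)
      refine le_of_forall_pos_le_add (fun ε hε => ?_)
      -- Step 3: choose δ localizing the sup near the fiber
      obtain ⟨δ, hδpos, hδ⟩ : ∃ δ : ℝ, 0 < δ ∧ ∀ x : X, ‖f x - t‖ < δ →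
          ‖eval (x : Fin n → ℂ) p‖ ≤ B₀ + ε/2 := by
        set V : Set X := {x : X | B₀ + ε/2 ≤ ‖eval (x : Fin n → ℂ) p‖} with hV
        have hVclosed : IsClosed V := by
          have hc : Continuous fun x : X => ‖eval (x : Fin n → ℂ) p‖ :=
            (Continuous.norm (MvPolynomial.continuous_eval p)).comp continuous_subtype_val
          exact isClosed_le continuous_const hc
        rcases V.eq_empty_or_nonempty with hVe | hVne
        · refine ⟨1, one_pos, fun x _ => ?_⟩
          by_contra hcon
          have : x ∈ V := le_of_not_ge hcon
          rw [hVe] at this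
          exact this
        · have hVcomp : IsCompact V := hVclosed.isCompact
          obtain ⟨xm, hxm, hmin⟩ := hVcomp.exists_isMinOn hVne
            ((Continuous.norm (show Continuous fun x : X => f x - t from f.continuous.sub continuous_const)).continuousOn)
          refine ⟨‖f xm - t‖, ?_, ?_⟩
          · rcases eq_or_ne (f xm) t with hfxm | hfxm
            · exfalso
              have hmem : (xm : Fin n → ℂ) ∈ F := ⟨xm, hfxm, rfl⟩
              have : ‖eval (xm : Fin n → ℂ) p‖ ≤ B₀ :=
                le_csSup (bddAbove_norm_eval hFcomp p) ⟨_, hmem, rfl⟩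
              have hxmV : B₀ + ε/2 ≤ ‖eval (xm : Fin n → ℂ) p‖ := hxm
              linarith
            · exact norm_pos_iff.mpr (sub_ne_zero.mpr hfxm)
          · intro x hx
            by_contra hcon
            have hxV : x ∈ V := le_of_not_ge hcon
            have := isMinOn_iff.mp hmin x hxV
            linarith
      -- Step 2: the peak-function estimate
      set M : ℝ := sSup ((fun x => ‖eval x p‖) '' X) with hM
      have hMbdd := bddAbove_norm_eval hX p
      have hMle : ∀ x : X, ‖eval (x : Fin n → ℂ) p‖ ≤ M :=
        fun x => le_csSup hMbdd ⟨x, x.2, rfl⟩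
      have hM0 : 0 ≤ M := by
        obtain ⟨x0, hx0⟩ := hXne
        exact le_trans (norm_nonneg _) (hMle ⟨x0, hx0⟩)
      set a : ℝ := ‖eval w p‖ with ha
      have ha0 : 0 ≤ a := norm_nonneg _
      set B : ℝ := B₀ + ε/2 with hB
      have hB0 : 0 ≤ B := by rw [hB]; linarith
      set ε' : ℝ := min (1/2) (ε/(4*(M + B + a + 1))) with hε'
      have hε'pos : 0 < ε' := lt_min (by norm_num) (by positivity)
      have hε'half : ε' ≤ 1/2 := min_le_left _ _
      have hε'small : ε' * (M + B + a) ≤ ε/4 := by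
        have h1 : ε' ≤ ε/(4*(M+B+a+1)) := min_le_right _ _
        have h2 : 0 ≤ M + B + a := by linarith
        calc ε' * (M+B+a) ≤ ε/(4*(M+B+a+1)) * (M+B+a) :=
              mul_le_mul_of_nonneg_right h1 h2
          _ ≤ ε/4 := by
              rw [div_mul_eq_mul_div, div_le_div_iff₀ (by positivity) (by norm_num : (0:ℝ) < 4)]
              nlinarith
      -- the peak function
      set hpk : C(Y, ℂ) := ⟨fun y => ((max 0 (1 - ‖(y:ℂ) - t‖/δ) : ℝ) : ℂ),
        Complex.continuous_ofReal.comp (continuous_const.max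
          ((continuous_const.sub ((continuous_subtype_val.sub continuous_const).norm.div_const δ))))⟩
        with hhpk
      have hpk_le : ∀ y : Y, ‖hpk y‖ ≤ 1 := by
        intro y
        rw [hhpk]
        simp only [ContinuousMap.coe_mk, Complex.norm_real]
        rw [Real.norm_eq_abs, abs_of_nonneg (le_max_left 0 _)]
        apply max_le (by norm_num)
        have : 0 ≤ ‖(y:ℂ) - t‖/δ := by positivity
        linarith
      have hpk_t : hpk ⟨t, htY⟩ = 1 := by
        rw [hhpk]
        simp
      have hpk_far : ∀ y : Y, δ ≤ ‖(y:ℂ) - t‖ → hpk y = 0 := by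
        intro y hy
        rw [hhpk]
        simp only [ContinuousMap.coe_mk, Complex.ofReal_eq_zero]
        rw [max_eq_left]
        have : 1 ≤ ‖(y:ℂ) - t‖/δ := (one_le_div hδpos).mpr hy
        linarith
      obtain ⟨q, hq⟩ := happrox hpk ε' hε'pos
      have hqt : 1 - ε' ≤ ‖q.eval t‖ := by
        have h1 := hq ⟨t, htY⟩
        rw [hpk_t] at h1
        have h1' : ‖Polynomial.eval t q - 1‖ ≤ ε' := h1
        have h2 : 1 - ‖Polynomial.eval t q‖ ≤ ‖Polynomial.eval t q - 1‖ := by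
          have h3 := norm_sub_norm_le (1:ℂ) (q.eval t)
          rw [norm_one, norm_sub_rev] at h3
          exact h3
        linarith
      have hq1 : ∀ y : Y, ‖q.eval (y:ℂ)‖ ≤ 1 + ε' := by
        intro y
        have h1 := hq y
        have h2 := norm_sub_norm_le (q.eval (y:ℂ)) (hpk y)
        have h3 := hpk_le y
        linarith [le_trans h2 h1]
      have hq2 : ∀ y : Y, δ ≤ ‖(y:ℂ) - t‖ → ‖q.eval (y:ℂ)‖ ≤ ε' := by
        intro y hy
        have h1 := hq y
        rw [hpk_far y hy, sub_zero] at h1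
        exact h1
      set P : MvPolynomial (Fin (n+1)) ℂ := rename Fin.castSucc p *
        Polynomial.aeval (MvPolynomial.X (Fin.last n) : MvPolynomial (Fin (n+1)) ℂ) q with hP
      have h1 := hz P
      have hevalz : eval z P = eval w p * q.eval t := by
        rw [hzsnoc, hP, eval_snoc_mul]
      rw [hevalz, norm_mul] at h1
      have hsup : sSup ((fun z' => ‖eval z' P‖) '' Γ) ≤ max (B*(1+ε')) (M*ε') := by
        apply Real.sSup_le
        · rintro v ⟨z', ⟨x, rfl⟩, rfl⟩
          show ‖eval (Fin.snoc (x : Fin n → ℂ) (f x)) P‖ ≤ _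
          rw [hP, eval_snoc_mul, norm_mul]
          have hfxY : (f x) ∈ Y := ⟨x, rfl⟩
          rcases lt_or_ge ‖f x - t‖ δ with hlt | hge
          · exact le_max_of_le_left (mul_le_mul (hδ x hlt) (hq1 ⟨f x, hfxY⟩)
              (norm_nonneg _) hB0)
          · exact le_max_of_le_right (mul_le_mul (hMle x) (hq2 ⟨f x, hfxY⟩ hge)
              (norm_nonneg _) hM0)
        · exact le_max_of_le_right (by positivity)
      have key : a * (1 - ε') ≤ max (B*(1+ε')) (M*ε') := by
        have h2 : a * (1 - ε') ≤ a * ‖q.eval t‖ :=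
          mul_le_mul_of_nonneg_left hqt ha0
        exact le_trans h2 (le_trans h1 hsup)
      have hmax : max (B*(1+ε')) (M*ε') ≤ B + (B+M)*ε' :=
        max_le (by nlinarith) (by nlinarith)
      clear_value a B M ε' B₀
      have key2 : a * (1 - ε') ≤ B + (B + M) * ε' := le_trans key hmax
      have e1 : a * (1 - ε') = a - a * ε' := by ring
      have e2 : (B + M) * ε' = B * ε' + M * ε' := by ring
      have e3 : ε' * (M + B + a) = M * ε' + B * ε' + a * ε' := by ring
      linarith [key2, hε'small, hB, hε, e1, e2, e3]
    rcases eq_or_ne t 0 with ht0 | ht0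
    · left
      refine ⟨w, ?_, by rw [hzsnoc, ht0]⟩
      rwa [hfib0, ← ht0]
    · right
      have := hfibers t ht0
      rw [IsPolyConvex] at this
      rw [this] at hwF
      obtain ⟨x, hx, hxw⟩ := hwF
      refine ⟨x, ?_⟩
      rw [hzsnoc, ← hxw]
      have hfx : f x = t := hx
      rw [hfx]
  · -- reverse inclusion
    rintro (⟨w, hw, rfl⟩ | hzΓ)
    · -- X₀ hull part
      intro P
      have hX₀ne : X₀.Nonempty := by
        by_contra h
        rw [Set.not_nonempty_iff_eq_empty] at h
        have h1 := hw 1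
        rw [h] at h1
        simp only [Set.image_empty, Real.sSup_empty, map_one, norm_one] at h1
        linarith
      set p₀ : MvPolynomial (Fin n) ℂ := aeval (Fin.snoc MvPolynomial.X (0:MvPolynomial (Fin n) ℂ)) P with hp₀
      rw [← eval_subst0]
      refine le_trans (hw p₀) ?_
      apply Real.sSup_le
      · rintro v ⟨x, hx, rfl⟩
        obtain ⟨xv, hxv, rfl⟩ := hfib0 ▸ hx
        show ‖eval (xv : Fin n → ℂ) p₀‖ ≤ _
        have : eval (xv : Fin n → ℂ) p₀ = eval (Fin.snoc (xv : Fin n → ℂ) (f xv)) P := by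
          rw [hp₀, eval_subst0]
          congr 1
          rw [Set.mem_preimage, Set.mem_singleton_iff] at hxv
          rw [hxv]
        rw [this]
        exact le_csSup (hΓbdd P) ⟨_, ⟨xv, rfl⟩, rfl⟩
      · obtain ⟨x0, hx0⟩ := hX₀ne
        have hx0X : x0 ∈ X := hX₀sub hx0
        refine le_trans (norm_nonneg (eval (Fin.snoc x0 (f ⟨x0, hx0X⟩)) P)) ?_
        exact le_csSup (hΓbdd P) ⟨_, ⟨⟨x0, hx0X⟩, rfl⟩, rfl⟩
    · -- graph part
      intro P
      exact le_csSup (hΓbdd P) ⟨z, hzΓ, rfl⟩
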